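/- arXiv:2211.05291 — 6 statements merged into one kernel-verified Lean document; each statement's English description precedes it below -/
import Mathlib

section
/- Let ℓ ≥ 1, let Q = (q^{ij}) ∈ ℝ^{ℓ×ℓ} satisfy Σ_{j=1}^ℓ q^{ij} = 0 for every i, let T > 0, a' > 0 and γ < 0. Define P̲^i(t) = (e^{−a'(T−t)} + (1/a')(1 − e^{−a'(T−t)}))^{1−γ} for every i ∈ {1,…,ℓ} and t ∈ [0,T]. Then for each i: P̲^i(T) = 1, P̲^i(t) ≥ e^{−a'(1−γ)T} for all t ∈ [0,T], and P̲^i is differentiable with (d/dt)P̲^i(t) = −[−a'(1−γ)·P̲^i(t) + (1−γ)·P̲^i(t)^{−γ/(1−γ)} + Σ_{j=1}^ℓ q^{ij}·P̲^j(t)] for all t ∈ [0,T]. -/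
open scoped BigOperators

theorem stmt_1 (ℓ : ℕ) (hℓ : 1 ≤ ℓ) (Q : Fin ℓ → Fin ℓ → ℝ)
    (hQ : ∀ i, ∑ j, Q i j = 0) (T a' γ : ℝ) (hT : 0 < T) (ha' : 0 < a')
    (hγ : γ < 0)
    (P : Fin ℓ → ℝ → ℝ)
    (hP : ∀ i t, P i t
      = (Real.exp (-a' * (T - t)) + (1 / a') * (1 - Real.exp (-a' * (T - t)))) ^ (1 - γ)) :
    ∀ i, P i T = 1
      ∧ (∀ t ∈ Set.Icc 0 T, Real.exp (-a' * (1 - γ) * T) ≤ P i t)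
      ∧ (∀ t ∈ Set.Icc 0 T, HasDerivAt (P i)
          (-(-a' * (1 - γ) * P i t + (1 - γ) * (P i t) ^ (-γ / (1 - γ))
            + ∑ j, Q i j * P j t)) t) := by
  have h1γ : (0:ℝ) < 1 - γ := by linarith
  intro i
  refine ⟨?_, ?_, ?_⟩
  · rw [hP]
    simp
  · intro t ht
    rw [hP]
    set u := Real.exp (-a' * (T - t)) with hu
    have hu1 : u ≤ 1 := by
      rw [hu]
      apply Real.exp_le_one_iff.mpr
      nlinarith [ht.2]
    have huT : Real.exp (-a' * T) ≤ u := by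
      apply Real.exp_le_exp.mpr
      nlinarith [ht.1]
    have hf : Real.exp (-a' * T) ≤ u + (1 / a') * (1 - u) := by
      have : 0 ≤ (1 / a') * (1 - u) :=
        mul_nonneg (by positivity) (by linarith)
      linarith
    calc Real.exp (-a' * (1 - γ) * T)
        = (Real.exp (-a' * T)) ^ (1 - γ) := by
          rw [← Real.exp_mul]; ring_nf
      _ ≤ (u + (1 / a') * (1 - u)) ^ (1 - γ) :=
          Real.rpow_le_rpow (Real.exp_pos _).le hf h1γ.le
  · intro t ht
    have hPeq : P i = fun s =>
        (Real.exp (-a' * (T - s)) + (1 / a') * (1 - Real.exp (-a' * (T - s)))) ^ (1 - γ) :=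
      funext (hP i)
    set u := Real.exp (-a' * (T - t)) with hu
    set f := u + (1 / a') * (1 - u) with hf
    have hu1 : u ≤ 1 := by
      rw [hu]
      apply Real.exp_le_one_iff.mpr
      nlinarith [ht.2]
    have hupos : 0 < u := Real.exp_pos _
    have hfpos : 0 < f := by
      have : 0 ≤ (1 / a') * (1 - u) :=
        mul_nonneg (by positivity) (by linarith)
      rw [hf]
      exact add_pos_of_pos_of_nonneg hupos this
    -- derivative of the inner function
    have hinner : HasDerivAt (fun s => -a' * (T - s)) a' t := by
      have : HasDerivAt (fun s => -a' * (T - s)) (-a' * (0 - 1)) t :=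
        ((hasDerivAt_const t T).sub (hasDerivAt_id t)).const_mul (-a')
      simpa using this
    have hexp : HasDerivAt (fun s => Real.exp (-a' * (T - s))) (u * a') t := hinner.exp
    have hfd : HasDerivAt (fun s =>
        Real.exp (-a' * (T - s)) + (1 / a') * (1 - Real.exp (-a' * (T - s))))
        (u * a' + (1 / a') * (0 - u * a')) t :=
      hexp.add (((hasDerivAt_const t (1:ℝ)).sub hexp).const_mul (1 / a'))
    have hderiv : HasDerivAt (P i)
        ((u * a' + (1 / a') * (0 - u * a')) * (1 - γ) * f ^ (1 - γ - 1)) t := by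
      rw [hPeq]
      exact hfd.rpow_const (Or.inl hfpos.ne')
    convert hderiv using 1
    -- value equality
    have hsum : ∑ j, Q i j * P j t = 0 := by
      have : ∀ j, P j t = f ^ (1 - γ) := fun j => hP j t
      simp only [this, ← Finset.sum_mul, hQ i, zero_mul]
    rw [hsum, hP i t]
    have hrw1 : ((f : ℝ) ^ (1 - γ)) ^ (-γ / (1 - γ)) = f ^ (-γ) := by
      rw [← Real.rpow_mul hfpos.le]
      congr 1
      field_simp
    have hrw2 : (f : ℝ) ^ (1 - γ) = f * f ^ (-γ) := by
      have : (1 : ℝ) - γ = 1 + (-γ) := by ring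
      rw [this, Real.rpow_add hfpos, Real.rpow_one]
    have hrw3 : (f : ℝ) ^ (1 - γ - 1) = f ^ (-γ) := by
      congr 1; ring
    rw [hrw1, hrw2, hrw3]
    have haf : a' * f = a' * u + (1 - u) := by
      rw [hf]; field_simp
    have h2 : u * a' + (1 / a') * (0 - u * a') = a' * u - u := by
      field_simp
      ring
    linear_combination ((1 - γ) * f ^ (-γ)) * haf - ((1 - γ) * f ^ (-γ)) * h2
end

section
/- Let γ < 0, ε > 0 and let k ∈ ℝ satisfy k ≥ −γε. Let g : ℝ → ℝ be any function with 0 ≤ g(x) ≤ 1 for all x. Then for every P ∈ ℝ: sup_{P̃ ∈ ℝ} [ (ε^γ − γε·P̃)·g(P̃) − k·|P − P̃| ] ≤ ε^γ − γε·|P|. -/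
theorem stmt_14 (γ ε k : ℝ) (hγ : γ < 0) (hε : 0 < ε) (hk : -γ * ε ≤ k)
    (g : ℝ → ℝ) (hg : ∀ x, g x ∈ Set.Icc (0 : ℝ) 1) :
    ∀ P : ℝ,
      sSup {y : ℝ | ∃ Pt : ℝ, y = (ε ^ γ - γ * ε * Pt) * g Pt - k * |P - Pt|}
        ≤ ε ^ γ - γ * ε * |P| := by
  intro P
  have hεγ : 0 < ε ^ γ := Real.rpow_pos_of_pos hε γ
  have hγε : 0 < -γ * ε := by nlinarith
  have habsP : 0 ≤ |P| := abs_nonneg P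
  apply Real.sSup_le
  · rintro y ⟨Pt, rfl⟩
    obtain ⟨hg0, hg1⟩ := hg Pt
    have h1 : Pt - P ≤ |P - Pt| := by
      have := neg_abs_le (P - Pt); linarith
    have h2 : 0 ≤ |P - Pt| := abs_nonneg _
    have h3 : P ≤ |P| := le_abs_self P
    rcases le_or_gt 0 (ε ^ γ - γ * ε * Pt) with h | h
    · have hprod : (ε ^ γ - γ * ε * Pt) * g Pt ≤ ε ^ γ - γ * ε * Pt := by
        nlinarith
      nlinarith [mul_nonneg (sub_nonneg.2 hk) h2, mul_nonneg hγε.le h2]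
    · have hprod : (ε ^ γ - γ * ε * Pt) * g Pt ≤ 0 := mul_nonpos_of_nonpos_of_nonneg h.le hg0
      nlinarith [mul_nonneg (le_trans hγε.le hk) h2, mul_nonneg hγε.le habsP]
  · nlinarith [mul_nonneg hγε.le habsP]
end

section
/- Let m, n ≥ 1 and let constants 0 < δ₁ ≤ δ₂, δ > 0, C > 0, ε > 0 be given. Let h ∈ [δ₁, δ₂], let b ∈ ℝ^m with |b| ≤ C, let σ ∈ ℝ^{m×n} with σσ' ≥ δ·I_m and |σ| ≤ C, let η ∈ ℝⁿ, and let Θ ⊆ ℝ^m × [0,∞) be a set containing (0, ε). Then there exists a constant K > 0, depending only on (δ₁, δ₂, δ, C, ε, m, n) and not on η, such that every pair (π̂, ĉ) ∈ Θ with ĉ > 0 that attains sup_{(π,c) ∈ Θ, c > 0} [ −(h/2)·π'σσ'π + π'(hb + ση) + ln c − h·c ] satisfies |π̂| ≤ K·(1 + |η|), e^{−K(1+|η|²)} ≤ ĉ, and ĉ ≤ K·(1 + |η|²). -/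
open Matrix

private lemma dot_le_sqrt_mul_sqrt {k : ℕ} (f g : Fin k → ℝ) :
    f ⬝ᵥ g ≤ Real.sqrt (∑ i, f i ^ 2) * Real.sqrt (∑ i, g i ^ 2) := by
  calc f ⬝ᵥ g ≤ |∑ i, f i * g i| := le_abs_self _
    _ = Real.sqrt ((∑ i, f i * g i) ^ 2) := (Real.sqrt_sq_eq_abs _).symm
    _ ≤ Real.sqrt ((∑ i, f i ^ 2) * ∑ i, g i ^ 2) :=
        Real.sqrt_le_sqrt (Finset.sum_mul_sq_le_sq_mul_sq _ _ _)
    _ = _ := Real.sqrt_mul (Finset.sum_nonneg fun i _ => sq_nonneg _) _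

private lemma mulVec_sq_sum_le {m n : ℕ} (σ : Matrix (Fin m) (Fin n) ℝ) (η : Fin n → ℝ) :
    ∑ i, ((σ *ᵥ η) i) ^ 2 ≤ (∑ i, ∑ j, σ i j ^ 2) * ∑ j, η j ^ 2 := by
  calc ∑ i, ((σ *ᵥ η) i) ^ 2 = ∑ i, (∑ j, σ i j * η j) ^ 2 := by
        simp [Matrix.mulVec, dotProduct]
    _ ≤ ∑ i, ((∑ j, σ i j ^ 2) * ∑ j, η j ^ 2) :=
        Finset.sum_le_sum fun i _ => Finset.sum_mul_sq_le_sq_mul_sq _ _ _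
    _ = _ := by rw [← Finset.sum_mul]

set_option maxHeartbeats 1600000 in
theorem stmt_16 (m n : ℕ) (hm : 1 ≤ m) (hn : 1 ≤ n)
    (δ₁ δ₂ δ C ε : ℝ) (hδ₁ : 0 < δ₁) (hδ₁₂ : δ₁ ≤ δ₂) (hδ : 0 < δ) (hC : 0 < C)
    (hε : 0 < ε) :
    ∃ K : ℝ, 0 < K ∧
      ∀ h ∈ Set.Icc δ₁ δ₂, ∀ b : Fin m → ℝ, Real.sqrt (∑ i, b i ^ 2) ≤ C →
      ∀ σ : Matrix (Fin m) (Fin n) ℝ,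
        (σ * σᵀ - δ • (1 : Matrix (Fin m) (Fin m) ℝ)).PosSemidef →
        Real.sqrt (∑ i, ∑ j, σ i j ^ 2) ≤ C →
      ∀ η : Fin n → ℝ, ∀ Θ : Set ((Fin m → ℝ) × ℝ),
        (∀ p ∈ Θ, 0 ≤ p.2) → ((0 : Fin m → ℝ), ε) ∈ Θ →
      ∀ πhat : Fin m → ℝ, ∀ chat : ℝ, (πhat, chat) ∈ Θ → 0 < chat →
        (∀ p ∈ Θ, 0 < p.2 →
          -(h / 2) * (p.1 ⬝ᵥ ((σ * σᵀ) *ᵥ p.1)) + p.1 ⬝ᵥ (h • b + σ *ᵥ η)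
              + Real.log p.2 - h * p.2
            ≤ -(h / 2) * (πhat ⬝ᵥ ((σ * σᵀ) *ᵥ πhat)) + πhat ⬝ᵥ (h • b + σ *ᵥ η)
              + Real.log chat - h * chat) →
        Real.sqrt (∑ i, πhat i ^ 2) ≤ K * (1 + Real.sqrt (∑ j, η j ^ 2))
          ∧ Real.exp (-K * (1 + ∑ j, η j ^ 2)) ≤ chat
          ∧ chat ≤ K * (1 + ∑ j, η j ^ 2) := by
  have hδ₂ : 0 < δ₂ := lt_of_lt_of_le hδ₁ hδ₁₂
  obtain ⟨a, ha, haeq⟩ : ∃ a : ℝ, 0 < a ∧ a = δ₁ * δ / 2 := ⟨_, by positivity, rfl⟩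
  obtain ⟨D', hD'1, hDle⟩ :
      ∃ D' : ℝ, 1 ≤ D' ∧ -1 - Real.log δ₁ - Real.log ε + δ₂ * ε ≤ D' := by
    refine ⟨|(-1 - Real.log δ₁ - Real.log ε + δ₂ * ε)| + 1,
      le_add_of_nonneg_left (abs_nonneg _), ?_⟩
    have := le_abs_self (-1 - Real.log δ₁ - Real.log ε + δ₂ * ε)
    linarith
  obtain ⟨K₁, hK₁1, hK₁eq⟩ :
      ∃ K₁ : ℝ, 1 ≤ K₁ ∧ a * K₁ = C * (δ₂ + 1) + D' + 1 + a := by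
    refine ⟨(C * (δ₂ + 1) + D' + 1) / a + 1, ?_, by field_simp⟩
    have h1 : 0 < C * (δ₂ + 1) + D' + 1 := by
      have := mul_pos hC (show (0:ℝ) < δ₂ + 1 by linarith)
      linarith
    have := div_pos h1 ha
    linarith
  have hK₁pos : 0 < K₁ := by linarith
  obtain ⟨L, hL0, hLle⟩ : ∃ L : ℝ, 0 ≤ L ∧ -L ≤ Real.log ε - δ₂ * ε :=
    ⟨|Real.log ε| + δ₂ * ε, by positivity,
      by linarith [neg_abs_le (Real.log ε)]⟩
  obtain ⟨K₂, hK₂pos, hK₂eq⟩ :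
      ∃ K₂ : ℝ, 0 < K₂ ∧ K₂ = 2 * C * (δ₂ + 1) * K₁ + L + 1 := by
    refine ⟨_, ?_, rfl⟩
    have := mul_pos (mul_pos (mul_pos two_pos hC) (show (0:ℝ) < δ₂ + 1 by linarith)) hK₁pos
    linarith
  obtain ⟨A, hA0, hA1⟩ : ∃ A : ℝ, 0 ≤ A ∧ -Real.log (δ₁ / 2) ≤ A :=
    ⟨|Real.log (δ₁ / 2)|, abs_nonneg _, neg_le_abs _⟩
  obtain ⟨G, hG0, hGeq⟩ : ∃ G : ℝ, 0 ≤ G ∧ δ₁ / 2 * G = K₂ + A := by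
    refine ⟨(2 / δ₁) * (K₂ + A), ?_, by field_simp⟩
    have : 0 ≤ K₂ + A := by linarith
    positivity
  refine ⟨K₁ + K₂ + G + 1, by linarith, ?_⟩
  intro h hh b hb σ hpsd hσ η Θ hΘpos hΘ0 πhat chat hmem hchat hopt
  obtain ⟨hh1, hh2⟩ := hh
  have hhpos : 0 < h := lt_of_lt_of_le hδ₁ hh1
  obtain ⟨E, hEdef⟩ : ∃ x : ℝ, x = Real.sqrt (∑ j, η j ^ 2) := ⟨_, rfl⟩
  obtain ⟨P, hPdef⟩ : ∃ x : ℝ, x = Real.sqrt (∑ i, πhat i ^ 2) := ⟨_, rfl⟩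
  rw [← hEdef, ← hPdef]
  have hE0 : 0 ≤ E := hEdef ▸ Real.sqrt_nonneg _
  have hP0 : 0 ≤ P := hPdef ▸ Real.sqrt_nonneg _
  have hE2 : E ^ 2 = ∑ j, η j ^ 2 := by
    rw [hEdef]; exact Real.sq_sqrt (Finset.sum_nonneg fun i _ => sq_nonneg _)
  have hP2 : P ^ 2 = ∑ i, πhat i ^ 2 := by
    rw [hPdef]; exact Real.sq_sqrt (Finset.sum_nonneg fun i _ => sq_nonneg _)
  -- key inequality from optimality at (0, ε)
  have key := hopt ((0 : Fin m → ℝ), ε) hΘ0 hε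
  simp only [zero_dotProduct, mul_zero, neg_zero, zero_add] at key
  -- quadratic form lower bound
  have hQ : δ * P ^ 2 ≤ πhat ⬝ᵥ ((σ * σᵀ) *ᵥ πhat) := by
    have h2 := hpsd.dotProduct_mulVec_nonneg πhat
    have hstar : star πhat = πhat := by funext i; simp
    rw [hstar] at h2
    have expand : (σ * σᵀ - δ • (1 : Matrix (Fin m) (Fin m) ℝ)) *ᵥ πhat
        = (σ * σᵀ) *ᵥ πhat - δ • πhat := by
      rw [Matrix.sub_mulVec, Matrix.smul_mulVec, Matrix.one_mulVec]
    rw [expand, dotProduct_sub, dotProduct_smul, sub_nonneg] at h2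
    have hself : πhat ⬝ᵥ πhat = P ^ 2 := by
      rw [hP2]; simp [dotProduct, sq]
    rw [smul_eq_mul, hself] at h2
    exact h2
  have hQ0 : 0 ≤ πhat ⬝ᵥ ((σ * σᵀ) *ᵥ πhat) := le_trans (by positivity) hQ
  -- linear term upper bound
  have hdb : πhat ⬝ᵥ b ≤ P * C := by
    rw [hPdef]
    exact le_trans (dot_le_sqrt_mul_sqrt _ _)
      (mul_le_mul_of_nonneg_left hb (Real.sqrt_nonneg _))
  have hdση : πhat ⬝ᵥ (σ *ᵥ η) ≤ P * (C * E) := by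
    rw [hPdef, hEdef]
    refine le_trans (dot_le_sqrt_mul_sqrt _ _)
      (mul_le_mul_of_nonneg_left ?_ (Real.sqrt_nonneg _))
    calc Real.sqrt (∑ i, ((σ *ᵥ η) i) ^ 2)
        ≤ Real.sqrt ((∑ i, ∑ j, σ i j ^ 2) * ∑ j, η j ^ 2) :=
          Real.sqrt_le_sqrt (mulVec_sq_sum_le σ η)
      _ = Real.sqrt (∑ i, ∑ j, σ i j ^ 2) * Real.sqrt (∑ j, η j ^ 2) :=
          Real.sqrt_mul (Finset.sum_nonneg fun i _ =>
            Finset.sum_nonneg fun j _ => sq_nonneg _) _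
      _ ≤ C * Real.sqrt (∑ j, η j ^ 2) :=
          mul_le_mul_of_nonneg_right hσ (Real.sqrt_nonneg _)
  have hS : πhat ⬝ᵥ (h • b + σ *ᵥ η) ≤ C * (δ₂ + E) * P := by
    rw [dotProduct_add, dotProduct_smul, smul_eq_mul]
    have h3 : h * (πhat ⬝ᵥ b) ≤ δ₂ * (P * C) := by
      calc h * (πhat ⬝ᵥ b) ≤ h * (P * C) :=
            mul_le_mul_of_nonneg_left hdb hhpos.le
        _ ≤ δ₂ * (P * C) := mul_le_mul_of_nonneg_right hh2 (by positivity)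
    linarith only [hdση, h3]
  obtain ⟨Q, hQdef⟩ : ∃ x : ℝ, x = πhat ⬝ᵥ ((σ * σᵀ) *ᵥ πhat) := ⟨_, rfl⟩
  obtain ⟨S, hSdef⟩ : ∃ x : ℝ, x = πhat ⬝ᵥ (h • b + σ *ᵥ η) := ⟨_, rfl⟩
  rw [← hQdef] at hQ hQ0
  rw [← hSdef] at hS
  rw [← hQdef, ← hSdef] at key
  -- bound on log c - h c from above
  have hlogc : Real.log chat - h * chat ≤ -1 - Real.log δ₁ := by
    have h1 : Real.log (h * chat) ≤ h * chat - 1 :=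
      Real.log_le_sub_one_of_pos (by positivity)
    rw [Real.log_mul hhpos.ne' hchat.ne'] at h1
    have h2 : Real.log δ₁ ≤ Real.log h := Real.log_le_log hδ₁ hh1
    linarith
  -- master quadratic inequality
  have master : a * P ^ 2 ≤ C * (δ₂ + E) * P + D' := by
    have hQ' : -(h / 2) * Q ≤ -(h / 2) * (δ * P ^ 2) := by
      apply mul_le_mul_of_nonpos_left hQ; linarith
    have hhh : a * P ^ 2 ≤ h / 2 * (δ * P ^ 2) := by
      rw [haeq]
      have : δ₁ * (δ * P ^ 2) ≤ h * (δ * P ^ 2) :=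
        mul_le_mul_of_nonneg_right hh1 (by positivity)
      linarith
    have hεh : Real.log ε - δ₂ * ε ≤ Real.log ε - h * ε := by
      linarith only [mul_le_mul_of_nonneg_right hh2 hε.le]
    linarith only [key, hQ', hS, hlogc, hεh, hDle, hhh]
  -- the bound on P
  have hPK : P ≤ K₁ * (1 + E) := by
    by_contra hcon
    push_neg at hcon
    have h1E : (1 : ℝ) ≤ 1 + E := by linarith
    have hPbig : 1 ≤ P :=
      le_trans (le_trans hK₁1 (le_mul_of_one_le_right hK₁pos.le h1E)) hcon.le
    have hB : C * (δ₂ + E) * P ≤ C * (δ₂ + 1) * (1 + E) * P := by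
      have h0 : C * (δ₂ + E) ≤ C * (δ₂ + 1) * (1 + E) := by
        have t := mul_nonneg (mul_nonneg hC.le hδ₂.le) hE0
        have := hC.le
        nlinarith [t, hC.le]
      exact mul_le_mul_of_nonneg_right h0 hP0
    have step : (a * K₁) * ((1 + E) * P) < a * (P * P) := by
      have h1 := mul_lt_mul_of_pos_right (mul_lt_mul_of_pos_left hcon ha)
        (show (0 : ℝ) < P by linarith)
      linarith only [h1]
    rw [hK₁eq] at step
    have hPE1 : (1 : ℝ) ≤ (1 + E) * P := by
      have := mul_le_mul h1E hPbig zero_le_one (by linarith : (0:ℝ) ≤ 1 + E)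
      linarith only [this]
    have t2 : (D' + 1 + a) * 1 ≤ (D' + 1 + a) * ((1 + E) * P) :=
      mul_le_mul_of_nonneg_left hPE1 (by linarith)
    linarith only [master, step, hB, t2, ha]
  -- lower bound for log chat - h*chat
  have hlow : -K₂ * (1 + E ^ 2) ≤ Real.log chat - h * chat := by
    have h1 : Real.log ε - h * ε - C * (δ₂ + E) * P ≤ Real.log chat - h * chat := by
      have hq : 0 ≤ h / 2 * Q := mul_nonneg (by linarith) hQ0
      linarith only [key, hS, hq]
    have hB : C * (δ₂ + E) ≤ C * (δ₂ + 1) * (1 + E) := by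
      have t := mul_nonneg (mul_nonneg hC.le hδ₂.le) hE0
      nlinarith [t, hC.le]
    have t1 : C * (δ₂ + E) * P ≤ (C * (δ₂ + 1) * K₁) * ((1 + E) * (1 + E)) := by
      have hne : 0 ≤ C * (δ₂ + 1) * (1 + E) :=
        mul_nonneg (mul_nonneg hC.le (by linarith)) (by linarith)
      have hBP := mul_le_mul hB hPK hP0 hne
      linarith only [hBP]
    have t2 : (C * (δ₂ + 1) * K₁) * ((1 + E) * (1 + E))
        ≤ (2 * C * (δ₂ + 1) * K₁) * (1 + E ^ 2) := by
      have hsq : (1 + E) * (1 + E) ≤ 2 * (1 + E ^ 2) := by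
        linarith only [sq_nonneg (1 - E)]
      have hcc : 0 ≤ C * (δ₂ + 1) * K₁ :=
        mul_nonneg (mul_nonneg hC.le (by linarith)) (by linarith)
      have := mul_le_mul_of_nonneg_left hsq hcc
      linarith only [this]
    have h4 : -L ≤ Real.log ε - h * ε := by
      linarith only [hLle, mul_le_mul_of_nonneg_right hh2 hε.le]
    have t3 : (L + 1) * 1 ≤ (L + 1) * (1 + E ^ 2) :=
      mul_le_mul_of_nonneg_left (by linarith only [sq_nonneg E]) (by linarith)
    rw [hK₂eq]
    linarith only [h1, t1, t2, h4, t3]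
  have hE2' : (1 : ℝ) + ∑ j, η j ^ 2 = 1 + E ^ 2 := by rw [hE2]
  have hE21 : (1 : ℝ) ≤ 1 + E ^ 2 := by linarith only [sq_nonneg E]
  refine ⟨?_, ?_, ?_⟩
  · have t := mul_nonneg (show (0:ℝ) ≤ K₂ + G + 1 by linarith)
      (show (0:ℝ) ≤ 1 + E by linarith)
    linarith only [hPK, t]
  · have h1 : -K₂ * (1 + E ^ 2) ≤ Real.log chat := by
      linarith only [hlow, mul_pos hhpos hchat]
    have h2 : -(K₁ + K₂ + G + 1) * (1 + E ^ 2) ≤ -K₂ * (1 + E ^ 2) := by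
      have t := mul_nonneg (show (0:ℝ) ≤ K₁ + G + 1 by linarith) (by linarith : (0:ℝ) ≤ 1 + E ^ 2)
      linarith only [t]
    calc Real.exp (-(K₁ + K₂ + G + 1) * (1 + ∑ j, η j ^ 2))
        ≤ Real.exp (Real.log chat) := by
          rw [show (1 : ℝ) + ∑ j, η j ^ 2 = 1 + E ^ 2 by rw [hE2]]
          exact Real.exp_le_exp.mpr (le_trans h2 h1)
      _ = chat := Real.exp_log hchat
  · have hup : Real.log chat ≤ δ₁ / 2 * chat - 1 - Real.log (δ₁ / 2) := by
      have h1 : Real.log (δ₁ / 2 * chat) ≤ δ₁ / 2 * chat - 1 :=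
        Real.log_le_sub_one_of_pos (by positivity)
      rw [Real.log_mul (by positivity) hchat.ne'] at h1
      linarith only [h1]
    have hδc : δ₁ * chat ≤ h * chat := mul_le_mul_of_nonneg_right hh1 hchat.le
    have hhalf : δ₁ / 2 * chat ≤ K₂ * (1 + E ^ 2) + A := by
      linarith only [hlow, hup, hδc, hA1]
    have hfin : δ₁ / 2 * chat ≤ δ₁ / 2 * (G * (1 + E ^ 2)) := by
      have t : K₂ * (1 + E ^ 2) + A ≤ (K₂ + A) * (1 + E ^ 2) := by
        linarith only [mul_nonneg hA0 (sq_nonneg E)]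
      rw [← hGeq] at t
      linarith only [hhalf, t]
    have hcg : chat ≤ G * (1 + E ^ 2) := by
      calc chat = 2 / δ₁ * (δ₁ / 2 * chat) := by field_simp
        _ ≤ 2 / δ₁ * (δ₁ / 2 * (G * (1 + E ^ 2))) :=
            mul_le_mul_of_nonneg_left hfin (by positivity)
        _ = G * (1 + E ^ 2) := by field_simp
    rw [show (K₁ + K₂ + G + 1) * (1 + ∑ j, η j ^ 2)
        = (K₁ + K₂ + G + 1) * (1 + E ^ 2) by rw [hE2]]
    have t := mul_nonneg (show (0:ℝ) ≤ K₁ + K₂ + 1 by linarith) (by linarith : (0:ℝ) ≤ 1 + E ^ 2)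
    linarith only [hcg, t]
end

section
/- Let γ ∈ (0,1), m, n ≥ 1, and let constants δ > 0, C > 0 and a₁ ∈ (0,1] be given. Let b ∈ ℝ^m with |b| ≤ C, let σ ∈ ℝ^{m×n} with σσ' ≥ δ·I_m and |σ| ≤ C, and let Θ ⊆ ℝ^m × [0,∞) be a set containing (0,0). For Y ∈ ℝ and Z ∈ ℝⁿ define F(Y,Z) = γ · sup_{(π,c) ∈ Θ} [ −((1−γ)/2)·π'σσ'π + π'(b + σZ) + (c^γ/γ)·e^{−Y} − c ]. Then F(Y,Z) ≥ 0 for all Y, Z, and there exists a constant K > 0, depending only on (δ, γ, C, a₁, m, n), such that for every Z ∈ ℝⁿ and every Y ≥ ln a₁: F(Y,Z) = γ · sup over (π,c) ∈ Θ with |π| ≤ K·(1 + |Z|) of the same expression. -/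
open Matrix

/-- The generator of the transformed power-utility BSDE system with coupled
constraint set `Θ`:
`F(Y,Z) = γ · sup_{(π,c) ∈ Θ} [ -((1-γ)/2) π'σσ'π + π'(b + σZ) + (c^γ/γ) e^{-Y} - c ]`. -/
noncomputable def powGen (m n : ℕ) (γ : ℝ) (b : Fin m → ℝ)
    (σ : Matrix (Fin m) (Fin n) ℝ) (Θ : Set ((Fin m → ℝ) × ℝ))
    (Y : ℝ) (Z : Fin n → ℝ) : ℝ :=
  γ * sSup {y : ℝ | ∃ p ∈ Θ,
    y = -((1 - γ) / 2) * (p.1 ⬝ᵥ ((σ * σᵀ) *ᵥ p.1)) + p.1 ⬝ᵥ (b + σ *ᵥ Z)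
      + (p.2 ^ γ / γ) * Real.exp (-Y) - p.2}

lemma cs_dot {k : ℕ} (v w : Fin k → ℝ) :
    v ⬝ᵥ w ≤ Real.sqrt (∑ i, v i ^ 2) * Real.sqrt (∑ i, w i ^ 2) := by
  have h := Finset.sum_mul_sq_le_sq_mul_sq Finset.univ v w
  have h1 : v ⬝ᵥ w ≤ |∑ i, v i * w i| := le_abs_self _
  calc v ⬝ᵥ w ≤ |∑ i, v i * w i| := h1
    _ = Real.sqrt ((∑ i, v i * w i) ^ 2) := (Real.sqrt_sq_eq_abs _).symm
    _ ≤ Real.sqrt ((∑ i, v i ^ 2) * ∑ i, w i ^ 2) := Real.sqrt_le_sqrt h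
    _ = _ := Real.sqrt_mul (by positivity) _

lemma sqrt_sum_sq_add {k : ℕ} (v w : Fin k → ℝ) :
    Real.sqrt (∑ i, (v i + w i) ^ 2) ≤
      Real.sqrt (∑ i, v i ^ 2) + Real.sqrt (∑ i, w i ^ 2) := by
  have hv : Real.sqrt (∑ i, v i ^ 2) ^ 2 = ∑ i, v i ^ 2 := Real.sq_sqrt (by positivity)
  have hw : Real.sqrt (∑ i, w i ^ 2) ^ 2 = ∑ i, w i ^ 2 := Real.sq_sqrt (by positivity)
  have hcs := cs_dot v w
  have h : ∑ i, (v i + w i) ^ 2 ≤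
      (Real.sqrt (∑ i, v i ^ 2) + Real.sqrt (∑ i, w i ^ 2)) ^ 2 := by
    have : ∑ i, (v i + w i) ^ 2 = (∑ i, v i ^ 2) + 2 * (v ⬝ᵥ w) + ∑ i, w i ^ 2 := by
      simp only [dotProduct, Finset.mul_sum, ← Finset.sum_add_distrib]
      apply Finset.sum_congr rfl; intro i _; ring
    rw [this]; nlinarith
  calc Real.sqrt (∑ i, (v i + w i) ^ 2) ≤
      Real.sqrt ((Real.sqrt (∑ i, v i ^ 2) + Real.sqrt (∑ i, w i ^ 2)) ^ 2) :=
        Real.sqrt_le_sqrt h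
    _ = _ := Real.sqrt_sq (by positivity)

lemma sqrt_sum_sq_mulVec {m n : ℕ} (σ : Matrix (Fin m) (Fin n) ℝ) (Z : Fin n → ℝ) :
    Real.sqrt (∑ i, (σ *ᵥ Z) i ^ 2) ≤
      Real.sqrt (∑ i, ∑ j, σ i j ^ 2) * Real.sqrt (∑ j, Z j ^ 2) := by
  have h : ∑ i, (σ *ᵥ Z) i ^ 2 ≤ (∑ i, ∑ j, σ i j ^ 2) * ∑ j, Z j ^ 2 := by
    rw [Finset.sum_mul]
    apply Finset.sum_le_sum
    intro i _
    exact Finset.sum_mul_sq_le_sq_mul_sq Finset.univ (σ i) Z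
  calc Real.sqrt (∑ i, (σ *ᵥ Z) i ^ 2) ≤
      Real.sqrt ((∑ i, ∑ j, σ i j ^ 2) * ∑ j, Z j ^ 2) := Real.sqrt_le_sqrt h
    _ = _ := Real.sqrt_mul (by positivity) _

lemma quad_lower {m n : ℕ} {δ : ℝ} {σ : Matrix (Fin m) (Fin n) ℝ}
    (hσ : (σ * σᵀ - δ • (1 : Matrix (Fin m) (Fin m) ℝ)).PosSemidef) (π : Fin m → ℝ) :
    δ * ∑ i, π i ^ 2 ≤ π ⬝ᵥ ((σ * σᵀ) *ᵥ π) := by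
  have h := hσ.dotProduct_mulVec_nonneg π
  simp only [star_trivial, Matrix.sub_mulVec, dotProduct_sub, Matrix.smul_mulVec,
    Matrix.one_mulVec, dotProduct_smul, smul_eq_mul] at h
  have : π ⬝ᵥ π = ∑ i, π i ^ 2 := by simp [dotProduct, sq]
  linarith [h, this ▸ h]

lemma c_bound {γ a₁ : ℝ} (hγ : γ ∈ Set.Ioo (0:ℝ) 1) (ha₁ : a₁ ∈ Set.Ioc (0:ℝ) 1)
    {c Y : ℝ} (hc : 0 ≤ c) (hY : Real.log a₁ ≤ Y) :
    (c ^ γ / γ) * Real.exp (-Y) - c ≤ (1 - γ) / (γ * a₁ ^ (1 / (1 - γ))) := by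
  obtain ⟨hγ0, hγ1⟩ := hγ
  obtain ⟨ha0, _⟩ := ha₁
  have h1γ : (0:ℝ) < 1 - γ := by linarith
  set lam : ℝ := a₁ ^ (1 / (1 - γ)) with hlam
  have hlam0 : 0 < lam := Real.rpow_pos_of_pos ha0 _
  -- exp(-Y) ≤ 1/a₁
  have hexp : Real.exp (-Y) ≤ 1 / a₁ := by
    rw [show (1:ℝ)/a₁ = Real.exp (Real.log (1/a₁)) from
      (Real.exp_log (by positivity)).symm]
    apply Real.exp_le_exp.2
    rw [Real.log_div one_ne_zero (ne_of_gt ha0), Real.log_one]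
    linarith
  have hcγ : 0 ≤ c ^ γ := Real.rpow_nonneg hc _
  -- geometric mean
  have hgm : (lam * c) ^ γ * (1:ℝ) ^ (1 - γ) ≤ γ * (lam * c) + (1 - γ) * 1 :=
    Real.geom_mean_le_arith_mean2_weighted (le_of_lt hγ0) (le_of_lt h1γ)
      (by positivity) zero_le_one (by ring)
  rw [Real.one_rpow, mul_one, mul_one,
    Real.mul_rpow (le_of_lt hlam0) hc] at hgm
  -- lam ^ (1-γ) = a₁
  have hl1 : lam ^ (1 - γ) = a₁ := by
    rw [hlam, ← Real.rpow_mul (le_of_lt ha0), one_div,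
      inv_mul_cancel₀ (ne_of_gt h1γ), Real.rpow_one]
  have hl2 : lam ^ γ * a₁ = lam := by
    rw [← hl1, ← Real.rpow_add hlam0, show γ + (1 - γ) = 1 by ring, Real.rpow_one]
  have hlγ : 0 < lam ^ γ := Real.rpow_pos_of_pos hlam0 _
  have hkey : c ^ γ * (lam / a₁) ≤ γ * lam * c + (1 - γ) := by
    have : lam ^ γ = lam / a₁ := by rw [eq_div_iff (ne_of_gt ha0)]; exact hl2
    nlinarith [hgm]
  have h2 : c ^ γ / (γ * a₁) ≤ c + (1 - γ) / (γ * lam) := by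
    rw [div_le_iff₀ (by positivity)]
    have h3 := mul_le_mul_of_nonneg_right hkey ha0.le
    rw [mul_assoc, div_mul_cancel₀ _ (ne_of_gt ha0)] at h3
    have hout : (c + (1 - γ) / (γ * lam)) * (γ * a₁) = (γ * lam * c + (1 - γ)) * a₁ / lam := by
      field_simp
    rw [hout, le_div_iff₀ hlam0]
    exact h3
  calc (c ^ γ / γ) * Real.exp (-Y) - c ≤ (c ^ γ / γ) * (1/a₁) - c := by
        have := mul_le_mul_of_nonneg_left hexp (by positivity : (0:ℝ) ≤ c ^ γ / γ)
        linarith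
    _ = c ^ γ / (γ * a₁) - c := by ring
    _ ≤ (1 - γ) / (γ * lam) := by linarith

set_option maxHeartbeats 1000000 in
theorem stmt_17 (γ : ℝ) (hγ : γ ∈ Set.Ioo (0 : ℝ) 1) (m n : ℕ) (hm : 1 ≤ m) (hn : 1 ≤ n)
    (δ C a₁ : ℝ) (hδ : 0 < δ) (hC : 0 < C) (ha₁ : a₁ ∈ Set.Ioc (0 : ℝ) 1) :
    (∀ b : Fin m → ℝ, Real.sqrt (∑ i, b i ^ 2) ≤ C →
      ∀ σ : Matrix (Fin m) (Fin n) ℝ,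
        (σ * σᵀ - δ • (1 : Matrix (Fin m) (Fin m) ℝ)).PosSemidef →
        Real.sqrt (∑ i, ∑ j, σ i j ^ 2) ≤ C →
      ∀ Θ : Set ((Fin m → ℝ) × ℝ), (∀ p ∈ Θ, 0 ≤ p.2) →
        ((0 : Fin m → ℝ), (0 : ℝ)) ∈ Θ →
      ∀ (Y : ℝ) (Z : Fin n → ℝ), 0 ≤ powGen m n γ b σ Θ Y Z)
    ∧ ∃ K : ℝ, 0 < K ∧
      ∀ b : Fin m → ℝ, Real.sqrt (∑ i, b i ^ 2) ≤ C →
      ∀ σ : Matrix (Fin m) (Fin n) ℝ,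
        (σ * σᵀ - δ • (1 : Matrix (Fin m) (Fin m) ℝ)).PosSemidef →
        Real.sqrt (∑ i, ∑ j, σ i j ^ 2) ≤ C →
      ∀ Θ : Set ((Fin m → ℝ) × ℝ), (∀ p ∈ Θ, 0 ≤ p.2) →
        ((0 : Fin m → ℝ), (0 : ℝ)) ∈ Θ →
      ∀ (Y : ℝ) (Z : Fin n → ℝ), Real.log a₁ ≤ Y →
        powGen m n γ b σ Θ Y Z
          = γ * sSup {y : ℝ | ∃ p ∈ Θ,
              Real.sqrt (∑ i, p.1 i ^ 2) ≤ K * (1 + Real.sqrt (∑ j, Z j ^ 2)) ∧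
              y = -((1 - γ) / 2) * (p.1 ⬝ᵥ ((σ * σᵀ) *ᵥ p.1)) + p.1 ⬝ᵥ (b + σ *ᵥ Z)
                + (p.2 ^ γ / γ) * Real.exp (-Y) - p.2} := by
  obtain ⟨hγ0, hγ1⟩ := hγ
  constructor
  · intro b hb σ hσ hσC Θ hΘ h0 Y Z
    unfold powGen
    apply mul_nonneg hγ0.le
    apply Real.sSup_nonneg'
    refine ⟨0, ⟨((0 : Fin m → ℝ), (0 : ℝ)), h0, ?_⟩, le_refl 0⟩
    simp [Real.zero_rpow (ne_of_gt hγ0)]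
  · have h1γ : (0:ℝ) < 1 - γ := by linarith
    set a : ℝ := (1 - γ) * δ / 2 with ha
    have ha0 : 0 < a := by rw [ha]; positivity
    set M : ℝ := (1 - γ) / (γ * a₁ ^ (1 / (1 - γ))) with hM
    have hM0 : 0 < M := by
      rw [hM]
      exact div_pos h1γ (mul_pos hγ0 (Real.rpow_pos_of_pos ha₁.1 _))
    set K : ℝ := max 1 ((C + M) / a) with hK
    have hK1 : (1:ℝ) ≤ K := le_max_left _ _
    have hK0 : (0:ℝ) < K := lt_of_lt_of_le one_pos hK1
    have hKa : C + M ≤ K * a := by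
      rw [← div_le_iff₀ ha0]; exact le_max_right _ _
    clear_value K
    clear_value a M
    refine ⟨K, hK0, ?_⟩
    intro b hb σ hσ hσC Θ hΘ h0 Y Z hY
    obtain ⟨t, hts⟩ : ∃ t : ℝ, t = 1 + Real.sqrt (∑ j, Z j ^ 2) := ⟨_, rfl⟩
    simp only [← hts]
    have ht : 1 ≤ t := by rw [hts]; exact le_add_of_nonneg_right (Real.sqrt_nonneg _)
    have ht0 : 0 < t := lt_of_lt_of_le one_pos ht
    -- the key pointwise bound
    have fbound : ∀ p ∈ Θ,
        -((1 - γ) / 2) * (p.1 ⬝ᵥ ((σ * σᵀ) *ᵥ p.1)) + p.1 ⬝ᵥ (b + σ *ᵥ Z)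
            + (p.2 ^ γ / γ) * Real.exp (-Y) - p.2
          ≤ -a * (∑ i, p.1 i ^ 2) + C * t * Real.sqrt (∑ i, p.1 i ^ 2) + M := by
      intro p hp
      have hquad := quad_lower hσ p.1
      have hs0 : (0:ℝ) ≤ ∑ i, p.1 i ^ 2 := by positivity
      have hu0 : (0:ℝ) ≤ Real.sqrt (∑ i, p.1 i ^ 2) := Real.sqrt_nonneg _
      have hlin : p.1 ⬝ᵥ (b + σ *ᵥ Z) ≤ Real.sqrt (∑ i, p.1 i ^ 2) * (C * t) := by
        have h1 : Real.sqrt (∑ i, (b + σ *ᵥ Z) i ^ 2) ≤ C * t := by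
          have h2 : Real.sqrt (∑ i, (b + σ *ᵥ Z) i ^ 2)
              ≤ Real.sqrt (∑ i, b i ^ 2) + Real.sqrt (∑ i, (σ *ᵥ Z) i ^ 2) := by
            simpa using sqrt_sum_sq_add b (σ *ᵥ Z)
          have h3 := sqrt_sum_sq_mulVec σ Z
          have h4 : Real.sqrt (∑ i, ∑ j, σ i j ^ 2) * Real.sqrt (∑ j, Z j ^ 2)
              ≤ C * Real.sqrt (∑ j, Z j ^ 2) :=
            mul_le_mul_of_nonneg_right hσC (Real.sqrt_nonneg _)
          have h5 : C + C * Real.sqrt (∑ j, Z j ^ 2) = C * t := by rw [hts]; ring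
          linarith
        calc p.1 ⬝ᵥ (b + σ *ᵥ Z)
            ≤ Real.sqrt (∑ i, p.1 i ^ 2) * Real.sqrt (∑ i, (b + σ *ᵥ Z) i ^ 2) :=
              cs_dot _ _
          _ ≤ Real.sqrt (∑ i, p.1 i ^ 2) * (C * t) :=
              mul_le_mul_of_nonneg_left h1 hu0
      have hcb := c_bound ⟨hγ0, hγ1⟩ ha₁ (hΘ p hp) hY
      have hquad2 : ((1 - γ) / 2) * (δ * ∑ i, p.1 i ^ 2)
          ≤ ((1 - γ) / 2) * (p.1 ⬝ᵥ ((σ * σᵀ) *ᵥ p.1)) :=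
        mul_le_mul_of_nonneg_left hquad (by linarith)
      have haS : a * (∑ i, p.1 i ^ 2) = (1 - γ) / 2 * (δ * ∑ i, p.1 i ^ 2) := by
        rw [ha]; ring
      have hMe : M = (1 - γ) / (γ * a₁ ^ (1 / (1 - γ))) := hM
      linarith [hquad2, hlin, hcb, haS]
    -- boundedness of the unrestricted set
    have hbddS : BddAbove {y : ℝ | ∃ p ∈ Θ,
        y = -((1 - γ) / 2) * (p.1 ⬝ᵥ ((σ * σᵀ) *ᵥ p.1)) + p.1 ⬝ᵥ (b + σ *ᵥ Z)
          + (p.2 ^ γ / γ) * Real.exp (-Y) - p.2} := by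
      refine ⟨(C * t) ^ 2 / (4 * a) + M, ?_⟩
      rintro y ⟨p, hp, rfl⟩
      have h1 := fbound p hp
      have hs0 : (0:ℝ) ≤ ∑ i, p.1 i ^ 2 := by positivity
      have hu2 : Real.sqrt (∑ i, p.1 i ^ 2) ^ 2 = ∑ i, p.1 i ^ 2 := Real.sq_sqrt hs0
      have h2 : -a * (∑ i, p.1 i ^ 2) + C * t * Real.sqrt (∑ i, p.1 i ^ 2)
          ≤ (C * t) ^ 2 / (4 * a) := by
        rw [le_div_iff₀ (by positivity)]
        have h3 : a ^ 2 * (∑ i, p.1 i ^ 2)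
            = a ^ 2 * Real.sqrt (∑ i, p.1 i ^ 2) ^ 2 := by rw [hu2]
        nlinarith [sq_nonneg (C * t - 2 * a * Real.sqrt (∑ i, p.1 i ^ 2)), h3]
      linarith
    have hsub : {y : ℝ | ∃ p ∈ Θ,
          Real.sqrt (∑ i, p.1 i ^ 2) ≤ K * t ∧
          y = -((1 - γ) / 2) * (p.1 ⬝ᵥ ((σ * σᵀ) *ᵥ p.1)) + p.1 ⬝ᵥ (b + σ *ᵥ Z)
            + (p.2 ^ γ / γ) * Real.exp (-Y) - p.2}
        ⊆ {y : ℝ | ∃ p ∈ Θ,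
          y = -((1 - γ) / 2) * (p.1 ⬝ᵥ ((σ * σᵀ) *ᵥ p.1)) + p.1 ⬝ᵥ (b + σ *ᵥ Z)
            + (p.2 ^ γ / γ) * Real.exp (-Y) - p.2} := by
      rintro y ⟨p, hp, _, hy⟩; exact ⟨p, hp, hy⟩
    have hbddS' := hbddS.mono hsub
    have h0S' : (0:ℝ) ∈ {y : ℝ | ∃ p ∈ Θ,
          Real.sqrt (∑ i, p.1 i ^ 2) ≤ K * t ∧
          y = -((1 - γ) / 2) * (p.1 ⬝ᵥ ((σ * σᵀ) *ᵥ p.1)) + p.1 ⬝ᵥ (b + σ *ᵥ Z)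
            + (p.2 ^ γ / γ) * Real.exp (-Y) - p.2} := by
      refine ⟨((0 : Fin m → ℝ), (0 : ℝ)), h0, ?_, ?_⟩
      · have hz : Real.sqrt (∑ i : Fin m, ((0 : Fin m → ℝ)) i ^ 2) = 0 := by simp
        rw [hz]
        positivity
      · simp [Real.zero_rpow (ne_of_gt hγ0)]
    unfold powGen
    congr 1
    apply le_antisymm
    · apply csSup_le ⟨0, hsub h0S'⟩
      rintro y ⟨p, hp, rfl⟩
      by_cases hcase : Real.sqrt (∑ i, p.1 i ^ 2) ≤ K * t
      · exact le_csSup hbddS' ⟨p, hp, hcase, rfl⟩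
      · push_neg at hcase
        obtain ⟨u, hus⟩ : ∃ u : ℝ, u = Real.sqrt (∑ i, p.1 i ^ 2) := ⟨_, rfl⟩
        have hKt : K * t ≤ u := hus ▸ le_of_lt hcase
        have hu0 : (0:ℝ) ≤ u := hus ▸ Real.sqrt_nonneg _
        have hu2 : u ^ 2 = ∑ i, p.1 i ^ 2 := by
          rw [hus]; exact Real.sq_sqrt (by positivity)
        have h1 := fbound p hp
        rw [← hus, ← hu2] at h1
        have h1Kt : 1 ≤ K * t := by nlinarith [hK1, ht]
        have hu1 : 1 ≤ u := le_trans h1Kt hKt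
        have htu : 1 ≤ t * u := by nlinarith [ht, hu1]
        have step1 : (C + M) * t ≤ a * u := by
          linarith [mul_le_mul_of_nonneg_left hKt ha0.le,
            mul_le_mul_of_nonneg_right hKa ht0.le]
        have hneg : -a * u ^ 2 + C * t * u + M ≤ 0 := by
          have hMtu : M * 1 ≤ M * (t * u) := mul_le_mul_of_nonneg_left htu hM0.le
          have hstep := mul_le_mul_of_nonneg_right step1 hu0
          nlinarith [hMtu, hstep]
        refine le_trans ?_ (le_csSup hbddS' h0S')
        linarith [h1, hneg]
    · exact csSup_le_csSup hbddS ⟨0, h0S'⟩ hsub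
end

section
/- Let γ ∈ (0,1), m, n ≥ 1, and let constants δ > 0, C > 0 and a₁ ∈ (0,1] be given. Let b ∈ ℝ^m with |b| ≤ C, let σ ∈ ℝ^{m×n} with σσ' ≥ δ·I_m and |σ| ≤ C, and let Θ ⊆ ℝ^m × [0,∞) be a set containing (0,0). For Y ∈ ℝ and Z ∈ ℝⁿ define F(Y,Z) = γ · sup_{(π,c) ∈ Θ} [ −((1−γ)/2)·π'σσ'π + π'(b + σZ) + (c^γ/γ)·e^{−Y} − c ]. Then: (i) for every fixed Z ∈ ℝⁿ, the map Y ↦ F(Y,Z) is non-increasing on ℝ; and (ii) there exists a constant K > 0, depending only on (δ, γ, C, a₁, m, n), such that |F(Y,Z) − F(Y,Z̃)| ≤ K·(1 + |Z| + |Z̃|)·|Z − Z̃| for all Z, Z̃ ∈ ℝⁿ and all Y ≥ ln a₁. -/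
open Matrix

namespace PowGenAux

lemma cs_dot {k : ℕ} (u v : Fin k → ℝ) :
    u ⬝ᵥ v ≤ Real.sqrt (∑ i, u i ^ 2) * Real.sqrt (∑ i, v i ^ 2) :=
  Real.sum_mul_le_sqrt_mul_sqrt _ _ _

lemma mulVec_norm_le {m n : ℕ} (σ : Matrix (Fin m) (Fin n) ℝ) (v : Fin n → ℝ) :
    Real.sqrt (∑ i, (σ *ᵥ v) i ^ 2) ≤
      Real.sqrt (∑ i, ∑ j, σ i j ^ 2) * Real.sqrt (∑ j, v j ^ 2) := by
  rw [← Real.sqrt_mul (by positivity)]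
  apply Real.sqrt_le_sqrt
  rw [Finset.sum_mul]
  apply Finset.sum_le_sum
  intro i _
  have h := Finset.sum_mul_sq_le_sq_mul_sq Finset.univ (fun j => σ i j) v
  simpa [mulVec, dotProduct] using h

lemma quad_lb {m n : ℕ} {δ : ℝ} {σ : Matrix (Fin m) (Fin n) ℝ}
    (hσ : (σ * σᵀ - δ • (1 : Matrix (Fin m) (Fin m) ℝ)).PosSemidef) (π : Fin m → ℝ) :
    δ * (∑ i, π i ^ 2) ≤ π ⬝ᵥ ((σ * σᵀ) *ᵥ π) := by
  have h := hσ.dotProduct_mulVec_nonneg π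
  have hs : star π = π := by simp
  rw [hs, sub_mulVec, dotProduct_sub, smul_mulVec, one_mulVec, dotProduct_smul] at h
  have h2 : π ⬝ᵥ π = ∑ i, π i ^ 2 := by simp [dotProduct, sq]
  rw [h2, smul_eq_mul] at h
  linarith

lemma pow_bound {γ : ℝ} (hγ0 : 0 < γ) (hγ1 : γ < 1) {c e : ℝ} (hc : 0 ≤ c) (he : 0 < e) :
    (c ^ γ / γ) * e - c ≤ (1 - γ) / γ * e ^ (1 / (1 - γ)) := by
  have h1γ : 0 < 1 - γ := by linarith
  set E := e ^ (1 / (1 - γ)) with hE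
  have hE0 : 0 ≤ E := Real.rpow_nonneg he.le _
  have key : c ^ γ * E ^ (1 - γ) ≤ γ * c + (1 - γ) * E :=
    Real.geom_mean_le_arith_mean2_weighted hγ0.le h1γ.le hc hE0 (by ring)
  have hE2 : E ^ (1 - γ) = e := by
    rw [hE, ← Real.rpow_mul he.le, one_div, inv_mul_cancel₀ h1γ.ne', Real.rpow_one]
  rw [hE2] at key
  have h3 : (γ * c + (1 - γ) * E) / γ = c + (1 - γ) / γ * E := by field_simp
  have h2 : (c ^ γ * e) / γ ≤ (γ * c + (1 - γ) * E) / γ := by gcongr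
  rw [div_mul_eq_mul_div]
  linarith [h3 ▸ h2]

noncomputable def pval {m n : ℕ} (γ : ℝ) (b : Fin m → ℝ) (σ : Matrix (Fin m) (Fin n) ℝ)
    (Y : ℝ) (Z : Fin n → ℝ) (p : (Fin m → ℝ) × ℝ) : ℝ :=
  -((1 - γ) / 2) * (p.1 ⬝ᵥ ((σ * σᵀ) *ᵥ p.1)) + p.1 ⬝ᵥ (b + σ *ᵥ Z)
    + (p.2 ^ γ / γ) * Real.exp (-Y) - p.2

lemma set_eq {m n : ℕ} (γ : ℝ) (b : Fin m → ℝ) (σ : Matrix (Fin m) (Fin n) ℝ)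
    (Θ : Set ((Fin m → ℝ) × ℝ)) (Y : ℝ) (Z : Fin n → ℝ) :
    {y : ℝ | ∃ p ∈ Θ,
      y = -((1 - γ) / 2) * (p.1 ⬝ᵥ ((σ * σᵀ) *ᵥ p.1)) + p.1 ⬝ᵥ (b + σ *ᵥ Z)
        + (p.2 ^ γ / γ) * Real.exp (-Y) - p.2} = pval γ b σ Y Z '' Θ := by
  ext y
  simp only [Set.mem_setOf_eq, Set.mem_image, pval]
  constructor
  · rintro ⟨p, hp, h⟩; exact ⟨p, hp, h.symm⟩
  · rintro ⟨p, hp, h⟩; exact ⟨p, hp, h.symm⟩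

lemma zero_mem_image {m n : ℕ} {γ : ℝ} (hγ0 : γ ≠ 0) (b : Fin m → ℝ)
    (σ : Matrix (Fin m) (Fin n) ℝ) {Θ : Set ((Fin m → ℝ) × ℝ)}
    (h0 : ((0 : Fin m → ℝ), (0 : ℝ)) ∈ Θ) (Y : ℝ) (Z : Fin n → ℝ) :
    (0 : ℝ) ∈ pval γ b σ Y Z '' Θ :=
  ⟨(0, 0), h0, by simp [pval, Real.zero_rpow hγ0]⟩

/-- Upper bound on a single element. -/
lemma pval_le {m n : ℕ} {γ δ C : ℝ} (hγ : γ ∈ Set.Ioo (0 : ℝ) 1) (hδ : 0 < δ)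
    {b : Fin m → ℝ} (hb : Real.sqrt (∑ i, b i ^ 2) ≤ C)
    {σ : Matrix (Fin m) (Fin n) ℝ}
    (hσ : (σ * σᵀ - δ • (1 : Matrix (Fin m) (Fin m) ℝ)).PosSemidef)
    (hσC : Real.sqrt (∑ i, ∑ j, σ i j ^ 2) ≤ C)
    {p : (Fin m → ℝ) × ℝ} (hp2 : 0 ≤ p.2) (Y : ℝ) (Z : Fin n → ℝ) :
    pval γ b σ Y Z p ≤
      -((1 - γ) * δ / 2) * (∑ i, p.1 i ^ 2)
        + Real.sqrt (∑ i, p.1 i ^ 2) * (C * (1 + Real.sqrt (∑ j, Z j ^ 2)))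
        + (1 - γ) / γ * Real.exp (-Y) ^ (1 / (1 - γ)) := by
  obtain ⟨hγ0, hγ1⟩ := hγ
  have hπ : (0:ℝ) ≤ Real.sqrt (∑ i, p.1 i ^ 2) := Real.sqrt_nonneg _
  have hZ : (0:ℝ) ≤ Real.sqrt (∑ j, Z j ^ 2) := Real.sqrt_nonneg _
  have hA : -((1 - γ) / 2) * (p.1 ⬝ᵥ ((σ * σᵀ) *ᵥ p.1)) ≤
      -((1 - γ) * δ / 2) * (∑ i, p.1 i ^ 2) := by
    have h := quad_lb hσ p.1
    nlinarith [h]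
  have hB1 : p.1 ⬝ᵥ b ≤ Real.sqrt (∑ i, p.1 i ^ 2) * C := by
    calc p.1 ⬝ᵥ b ≤ Real.sqrt (∑ i, p.1 i ^ 2) * Real.sqrt (∑ i, b i ^ 2) := cs_dot _ _
    _ ≤ Real.sqrt (∑ i, p.1 i ^ 2) * C := by gcongr
  have hB2 : p.1 ⬝ᵥ (σ *ᵥ Z) ≤
      Real.sqrt (∑ i, p.1 i ^ 2) * (C * Real.sqrt (∑ j, Z j ^ 2)) := by
    calc p.1 ⬝ᵥ (σ *ᵥ Z)
        ≤ Real.sqrt (∑ i, p.1 i ^ 2) * Real.sqrt (∑ i, (σ *ᵥ Z) i ^ 2) := cs_dot _ _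
      _ ≤ Real.sqrt (∑ i, p.1 i ^ 2)
            * (Real.sqrt (∑ i, ∑ j, σ i j ^ 2) * Real.sqrt (∑ j, Z j ^ 2)) := by
          gcongr
          exact mulVec_norm_le σ Z
      _ ≤ Real.sqrt (∑ i, p.1 i ^ 2) * (C * Real.sqrt (∑ j, Z j ^ 2)) := by gcongr
  have hG : (p.2 ^ γ / γ) * Real.exp (-Y) - p.2 ≤
      (1 - γ) / γ * Real.exp (-Y) ^ (1 / (1 - γ)) :=
    pow_bound hγ0 hγ1 hp2 (Real.exp_pos _)
  have hBsplit : p.1 ⬝ᵥ (b + σ *ᵥ Z) = p.1 ⬝ᵥ b + p.1 ⬝ᵥ (σ *ᵥ Z) := dotProduct_add _ _ _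
  unfold pval
  rw [hBsplit]
  nlinarith [hA, hB1, hB2, hG]

lemma quad_max {α N t : ℝ} (hα : 0 < α) : -α * t ^ 2 + t * N ≤ N ^ 2 / (4 * α) := by
  rw [le_div_iff₀ (by positivity)]
  nlinarith [sq_nonneg (N - 2 * α * t)]

/-- Bounded above. -/
lemma bdd_above {m n : ℕ} {γ δ C : ℝ} (hγ : γ ∈ Set.Ioo (0 : ℝ) 1) (hδ : 0 < δ)
    {b : Fin m → ℝ} (hb : Real.sqrt (∑ i, b i ^ 2) ≤ C)
    {σ : Matrix (Fin m) (Fin n) ℝ}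
    (hσ : (σ * σᵀ - δ • (1 : Matrix (Fin m) (Fin m) ℝ)).PosSemidef)
    (hσC : Real.sqrt (∑ i, ∑ j, σ i j ^ 2) ≤ C)
    {Θ : Set ((Fin m → ℝ) × ℝ)} (hΘ : ∀ p ∈ Θ, 0 ≤ p.2) (Y : ℝ) (Z : Fin n → ℝ) :
    BddAbove (pval γ b σ Y Z '' Θ) := by
  obtain ⟨hγ0, hγ1⟩ := hγ
  refine ⟨(C * (1 + Real.sqrt (∑ j, Z j ^ 2))) ^ 2 / (4 * ((1 - γ) * δ / 2))
      + (1 - γ) / γ * Real.exp (-Y) ^ (1 / (1 - γ)), ?_⟩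
  rintro y ⟨p, hp, rfl⟩
  have hle := pval_le ⟨hγ0, hγ1⟩ hδ hb hσ hσC (hΘ p hp) Y Z
  set t := Real.sqrt (∑ i, p.1 i ^ 2) with ht
  have ht2 : (∑ i, p.1 i ^ 2) = t ^ 2 :=
    (Real.sq_sqrt (Finset.sum_nonneg fun i _ => sq_nonneg _)).symm
  rw [ht2] at hle
  have hq := quad_max (α := (1 - γ) * δ / 2)
    (N := C * (1 + Real.sqrt (∑ j, Z j ^ 2))) (t := t)
    (by nlinarith [mul_pos (show (0:ℝ) < 1 - γ by linarith) hδ])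
  linarith [hle, hq]


lemma t_bound {α N G t : ℝ} (hα : 0 < α) (hN : 0 ≤ N) (hG : 0 ≤ G) (ht : 0 ≤ t)
    (h : 0 < -α * t ^ 2 + t * N + G) : t ≤ 1 + (N + G) / α := by
  rcases le_or_gt t 1 with h1 | h1
  · have := div_nonneg (by linarith : (0:ℝ) ≤ N + G) hα.le
    linarith
  · have h5 : (α * t) * t < (N + G) * t := by
      nlinarith [mul_nonneg hG (by linarith : (0:ℝ) ≤ t - 1)]
    have h6 : α * t < N + G := lt_of_mul_lt_mul_right h5 ht
    have h7 : t < (N + G) / α := by rw [lt_div_iff₀ hα]; linarith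
    linarith

/-- One-sided sup comparison. -/
lemma ssup_sub_le {m n : ℕ} {γ δ C a₁ : ℝ} (hγ : γ ∈ Set.Ioo (0 : ℝ) 1) (hδ : 0 < δ)
    (hC : 0 < C) (ha₁ : a₁ ∈ Set.Ioc (0 : ℝ) 1)
    {b : Fin m → ℝ} (hb : Real.sqrt (∑ i, b i ^ 2) ≤ C)
    {σ : Matrix (Fin m) (Fin n) ℝ}
    (hσ : (σ * σᵀ - δ • (1 : Matrix (Fin m) (Fin m) ℝ)).PosSemidef)
    (hσC : Real.sqrt (∑ i, ∑ j, σ i j ^ 2) ≤ C)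
    {Θ : Set ((Fin m → ℝ) × ℝ)} (hΘ : ∀ p ∈ Θ, 0 ≤ p.2)
    (h0 : ((0 : Fin m → ℝ), (0 : ℝ)) ∈ Θ)
    (Y : ℝ) (Z Zt : Fin n → ℝ) (hY : Real.log a₁ ≤ Y) :
    sSup (pval γ b σ Y Z '' Θ) ≤ sSup (pval γ b σ Y Zt '' Θ)
      + ((1 + (2 * C + (1 - γ) / γ * Real.exp (-Real.log a₁ * (1 / (1 - γ))))
              / ((1 - γ) * δ / 2)) * (1 + Real.sqrt (∑ j, Z j ^ 2)))
        * (C * Real.sqrt (∑ j, (Z j - Zt j) ^ 2)) := by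
  obtain ⟨hγ0, hγ1⟩ := hγ
  have h1γ : (0:ℝ) < 1 - γ := by linarith
  have hα0 : (0:ℝ) < (1 - γ) * δ / 2 := by positivity
  have hdZ0 : (0:ℝ) ≤ Real.sqrt (∑ j, (Z j - Zt j) ^ 2) := Real.sqrt_nonneg _
  have hNZ0 : (0:ℝ) ≤ Real.sqrt (∑ j, Z j ^ 2) := Real.sqrt_nonneg _
  have hN0 : (0:ℝ) ≤ C * (1 + Real.sqrt (∑ j, Z j ^ 2)) := by positivity
  have hG00 : (0:ℝ) ≤ (1 - γ) / γ * Real.exp (-Real.log a₁ * (1 / (1 - γ))) := by positivity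
  have hw0 : (0:ℝ) ≤ (2 * C + (1 - γ) / γ * Real.exp (-Real.log a₁ * (1 / (1 - γ))))
      / ((1 - γ) * δ / 2) := by positivity
  have hR1 : (1:ℝ) ≤ (1 + (2 * C + (1 - γ) / γ * Real.exp (-Real.log a₁ * (1 / (1 - γ))))
      / ((1 - γ) * δ / 2)) * (1 + Real.sqrt (∑ j, Z j ^ 2)) := by
    nlinarith [hw0, hNZ0, mul_nonneg hw0 hNZ0]
  have hbdd2 := bdd_above ⟨hγ0, hγ1⟩ hδ hb hσ hσC hΘ Y Zt
  have hsup2 : (0:ℝ) ≤ sSup (pval γ b σ Y Zt '' Θ) :=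
    le_csSup hbdd2 (zero_mem_image hγ0.ne' b σ h0 Y Zt)
  apply csSup_le ⟨0, zero_mem_image hγ0.ne' b σ h0 Y Z⟩
  rintro y ⟨p, hp, rfl⟩
  by_cases hy : pval γ b σ Y Z p ≤ 0
  · have hRC : (0:ℝ) ≤ ((1 + (2 * C + (1 - γ) / γ * Real.exp (-Real.log a₁ * (1 / (1 - γ))))
              / ((1 - γ) * δ / 2)) * (1 + Real.sqrt (∑ j, Z j ^ 2)))
        * (C * Real.sqrt (∑ j, (Z j - Zt j) ^ 2)) :=
      mul_nonneg (by linarith) (by positivity)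
    linarith
  · push_neg at hy
    have ht0 : (0:ℝ) ≤ Real.sqrt (∑ i, p.1 i ^ 2) := Real.sqrt_nonneg _
    have ht2 : (∑ i, p.1 i ^ 2) = Real.sqrt (∑ i, p.1 i ^ 2) ^ 2 :=
      (Real.sq_sqrt (Finset.sum_nonneg fun i _ => sq_nonneg _)).symm
    have hGle : Real.exp (-Y) ^ (1 / (1 - γ)) ≤ Real.exp (-Real.log a₁ * (1 / (1 - γ))) := by
      rw [← Real.exp_mul]
      apply Real.exp_le_exp.2
      apply mul_le_mul_of_nonneg_right (by linarith) (by positivity)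
    have hub := pval_le ⟨hγ0, hγ1⟩ hδ hb hσ hσC (hΘ p hp) Y Z
    have hGle2 : (1 - γ) / γ * Real.exp (-Y) ^ (1 / (1 - γ)) ≤
        (1 - γ) / γ * Real.exp (-Real.log a₁ * (1 / (1 - γ))) := by gcongr
    have hkey : 0 < -((1 - γ) * δ / 2) * Real.sqrt (∑ i, p.1 i ^ 2) ^ 2
        + Real.sqrt (∑ i, p.1 i ^ 2) * (C * (1 + Real.sqrt (∑ j, Z j ^ 2)))
        + (1 - γ) / γ * Real.exp (-Real.log a₁ * (1 / (1 - γ))) := by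
      nlinarith [hub, hGle2, hy, ht2]
    have htR : Real.sqrt (∑ i, p.1 i ^ 2) ≤ 1 + (C * (1 + Real.sqrt (∑ j, Z j ^ 2))
        + (1 - γ) / γ * Real.exp (-Real.log a₁ * (1 / (1 - γ)))) / ((1 - γ) * δ / 2) :=
      t_bound hα0 hN0 hG00 ht0 hkey
    have hdivle : (C * (1 + Real.sqrt (∑ j, Z j ^ 2))
          + (1 - γ) / γ * Real.exp (-Real.log a₁ * (1 / (1 - γ)))) / ((1 - γ) * δ / 2)
        ≤ ((2 * C + (1 - γ) / γ * Real.exp (-Real.log a₁ * (1 / (1 - γ))))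
            / ((1 - γ) * δ / 2)) * (1 + Real.sqrt (∑ j, Z j ^ 2)) := by
      have hnum : C * (1 + Real.sqrt (∑ j, Z j ^ 2))
          + (1 - γ) / γ * Real.exp (-Real.log a₁ * (1 / (1 - γ)))
          ≤ (2 * C + (1 - γ) / γ * Real.exp (-Real.log a₁ * (1 / (1 - γ))))
            * (1 + Real.sqrt (∑ j, Z j ^ 2)) := by
        nlinarith [hNZ0, hC.le, hG00]
      calc (C * (1 + Real.sqrt (∑ j, Z j ^ 2))
            + (1 - γ) / γ * Real.exp (-Real.log a₁ * (1 / (1 - γ)))) / ((1 - γ) * δ / 2)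
          ≤ ((2 * C + (1 - γ) / γ * Real.exp (-Real.log a₁ * (1 / (1 - γ))))
              * (1 + Real.sqrt (∑ j, Z j ^ 2))) / ((1 - γ) * δ / 2) := by gcongr
        _ = ((2 * C + (1 - γ) / γ * Real.exp (-Real.log a₁ * (1 / (1 - γ))))
              / ((1 - γ) * δ / 2)) * (1 + Real.sqrt (∑ j, Z j ^ 2)) := by ring
    have htR2 : Real.sqrt (∑ i, p.1 i ^ 2) ≤
        (1 + (2 * C + (1 - γ) / γ * Real.exp (-Real.log a₁ * (1 / (1 - γ))))
            / ((1 - γ) * δ / 2)) * (1 + Real.sqrt (∑ j, Z j ^ 2)) := by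
      linarith only [htR, hdivle, hNZ0, hw0]
    have hdiff : pval γ b σ Y Z p - pval γ b σ Y Zt p ≤
        Real.sqrt (∑ i, p.1 i ^ 2) * (C * Real.sqrt (∑ j, (Z j - Zt j) ^ 2)) := by
      have heq : pval γ b σ Y Z p - pval γ b σ Y Zt p = p.1 ⬝ᵥ (σ *ᵥ (Z - Zt)) := by
        unfold pval
        rw [mulVec_sub, dotProduct_sub, dotProduct_add, dotProduct_add]
        ring
      have hZZt : Real.sqrt (∑ j, (Z - Zt) j ^ 2) = Real.sqrt (∑ j, (Z j - Zt j) ^ 2) := rfl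
      rw [heq]
      calc p.1 ⬝ᵥ (σ *ᵥ (Z - Zt))
          ≤ Real.sqrt (∑ i, p.1 i ^ 2) * Real.sqrt (∑ i, (σ *ᵥ (Z - Zt)) i ^ 2) := cs_dot _ _
        _ ≤ Real.sqrt (∑ i, p.1 i ^ 2) * (Real.sqrt (∑ i, ∑ j, σ i j ^ 2)
              * Real.sqrt (∑ j, (Z - Zt) j ^ 2)) := by
            gcongr
            exact mulVec_norm_le _ _
        _ ≤ Real.sqrt (∑ i, p.1 i ^ 2) * (C * Real.sqrt (∑ j, (Z j - Zt j) ^ 2)) := by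
            rw [hZZt]
            gcongr
    have h8 : pval γ b σ Y Zt p ≤ sSup (pval γ b σ Y Zt '' Θ) :=
      le_csSup hbdd2 ⟨p, hp, rfl⟩
    have h9 : Real.sqrt (∑ i, p.1 i ^ 2) * (C * Real.sqrt (∑ j, (Z j - Zt j) ^ 2)) ≤
        ((1 + (2 * C + (1 - γ) / γ * Real.exp (-Real.log a₁ * (1 / (1 - γ))))
              / ((1 - γ) * δ / 2)) * (1 + Real.sqrt (∑ j, Z j ^ 2)))
        * (C * Real.sqrt (∑ j, (Z j - Zt j) ^ 2)) :=
      mul_le_mul_of_nonneg_right htR2 (by positivity)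
    linarith


lemma final_step {γ w sZ sZt dZ C S1 S2 : ℝ} (hγ0 : 0 < γ) (hγ1 : γ < 1)
    (hC : 0 < C) (hw : 0 ≤ w) (hsZ : 0 ≤ sZ) (hsZt : 0 ≤ sZt) (hdZ : 0 ≤ dZ)
    (h1 : S1 ≤ S2 + ((1 + w) * (1 + sZ)) * (C * dZ)) :
    γ * S1 - γ * S2 ≤ (C * (1 + w)) * (1 + sZ + sZt) * dZ := by
  have hcoef0 : 0 ≤ ((1 + w) * (1 + sZ)) * (C * dZ) := by positivity
  have e1 : 0 ≤ γ * (S2 + ((1 + w) * (1 + sZ)) * (C * dZ) - S1) :=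
    mul_nonneg hγ0.le (by linarith)
  have e2 : 0 ≤ (1 - γ) * (((1 + w) * (1 + sZ)) * (C * dZ)) :=
    mul_nonneg (by linarith) hcoef0
  have e3 : 0 ≤ C * (1 + w) * dZ * sZt :=
    mul_nonneg (mul_nonneg (mul_nonneg hC.le (by linarith)) hdZ) hsZt
  nlinarith [e1, e2, e3]

end PowGenAux

theorem stmt_18 (γ : ℝ) (hγ : γ ∈ Set.Ioo (0 : ℝ) 1) (m n : ℕ) (hm : 1 ≤ m) (hn : 1 ≤ n)
    (δ C a₁ : ℝ) (hδ : 0 < δ) (hC : 0 < C) (ha₁ : a₁ ∈ Set.Ioc (0 : ℝ) 1) :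
    (∀ b : Fin m → ℝ, Real.sqrt (∑ i, b i ^ 2) ≤ C →
      ∀ σ : Matrix (Fin m) (Fin n) ℝ,
        (σ * σᵀ - δ • (1 : Matrix (Fin m) (Fin m) ℝ)).PosSemidef →
        Real.sqrt (∑ i, ∑ j, σ i j ^ 2) ≤ C →
      ∀ Θ : Set ((Fin m → ℝ) × ℝ), (∀ p ∈ Θ, 0 ≤ p.2) →
        ((0 : Fin m → ℝ), (0 : ℝ)) ∈ Θ →
      ∀ Z : Fin n → ℝ, Antitone (fun Y => powGen m n γ b σ Θ Y Z))
    ∧ ∃ K : ℝ, 0 < K ∧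
      ∀ b : Fin m → ℝ, Real.sqrt (∑ i, b i ^ 2) ≤ C →
      ∀ σ : Matrix (Fin m) (Fin n) ℝ,
        (σ * σᵀ - δ • (1 : Matrix (Fin m) (Fin m) ℝ)).PosSemidef →
        Real.sqrt (∑ i, ∑ j, σ i j ^ 2) ≤ C →
      ∀ Θ : Set ((Fin m → ℝ) × ℝ), (∀ p ∈ Θ, 0 ≤ p.2) →
        ((0 : Fin m → ℝ), (0 : ℝ)) ∈ Θ →
      ∀ (Y : ℝ) (Z Zt : Fin n → ℝ), Real.log a₁ ≤ Y →
        |powGen m n γ b σ Θ Y Z - powGen m n γ b σ Θ Y Zt|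
          ≤ K * (1 + Real.sqrt (∑ j, Z j ^ 2) + Real.sqrt (∑ j, Zt j ^ 2))
            * Real.sqrt (∑ j, (Z j - Zt j) ^ 2) := by
  obtain ⟨hγ0, hγ1⟩ := hγ
  have h1γ : (0 : ℝ) < 1 - γ := by linarith
  constructor
  · intro b hb σ hσ hσC Θ hΘ h0 Z Y1 Y2 hY12
    show powGen m n γ b σ Θ Y2 Z ≤ powGen m n γ b σ Θ Y1 Z
    unfold powGen
    rw [PowGenAux.set_eq, PowGenAux.set_eq]
    apply mul_le_mul_of_nonneg_left ?_ hγ0.le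
    apply csSup_le ⟨0, PowGenAux.zero_mem_image hγ0.ne' b σ h0 Y2 Z⟩
    rintro y ⟨p, hp, rfl⟩
    refine le_trans ?_
      (le_csSup (PowGenAux.bdd_above ⟨hγ0, hγ1⟩ hδ hb hσ hσC hΘ Y1 Z) ⟨p, hp, rfl⟩)
    unfold PowGenAux.pval
    have hc : 0 ≤ p.2 ^ γ / γ := div_nonneg (Real.rpow_nonneg (hΘ p hp) _) hγ0.le
    have he : Real.exp (-Y2) ≤ Real.exp (-Y1) := Real.exp_le_exp.2 (by linarith)
    have hmul := mul_le_mul_of_nonneg_left he hc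
    linarith only [hmul]
  · have hα0 : (0 : ℝ) < (1 - γ) * δ / 2 := by positivity
    have hG00 : (0 : ℝ) ≤ (1 - γ) / γ * Real.exp (-Real.log a₁ * (1 / (1 - γ))) := by positivity
    have hw0 : (0 : ℝ) ≤ (2 * C + (1 - γ) / γ * Real.exp (-Real.log a₁ * (1 / (1 - γ))))
        / ((1 - γ) * δ / 2) := div_nonneg (by linarith) hα0.le
    refine ⟨C * (1 + (2 * C + (1 - γ) / γ * Real.exp (-Real.log a₁ * (1 / (1 - γ))))
        / ((1 - γ) * δ / 2)), mul_pos hC (by linarith), ?_⟩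
    intro b hb σ hσ hσC Θ hΘ h0 Y Z Zt hY
    have h1 := PowGenAux.ssup_sub_le ⟨hγ0, hγ1⟩ hδ hC ha₁ hb hσ hσC hΘ h0 Y Z Zt hY
    have h2 := PowGenAux.ssup_sub_le ⟨hγ0, hγ1⟩ hδ hC ha₁ hb hσ hσC hΘ h0 Y Zt Z hY
    have hsym : (∑ j, (Zt j - Z j) ^ 2) = (∑ j, (Z j - Zt j) ^ 2) :=
      Finset.sum_congr rfl fun j _ => by ring
    rw [hsym] at h2
    have hsZ : (0:ℝ) ≤ Real.sqrt (∑ j, Z j ^ 2) := Real.sqrt_nonneg _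
    have hsZt : (0:ℝ) ≤ Real.sqrt (∑ j, Zt j ^ 2) := Real.sqrt_nonneg _
    have hdZ : (0:ℝ) ≤ Real.sqrt (∑ j, (Z j - Zt j) ^ 2) := Real.sqrt_nonneg _
    unfold powGen
    rw [PowGenAux.set_eq, PowGenAux.set_eq, abs_sub_le_iff]
    constructor
    · exact PowGenAux.final_step hγ0 hγ1 hC hw0 hsZ hsZt hdZ h1
    · have := PowGenAux.final_step hγ0 hγ1 hC hw0 hsZt hsZ hdZ h2
      linarith only [this]
end

section
/- Let γ ∈ (0,1), m, n ≥ 1, and let constants 0 < δ₁ ≤ δ₂, δ > 0, C > 0 be given. Let P ∈ [δ₁, δ₂], let b ∈ ℝ^m with |b| ≤ C, let σ ∈ ℝ^{m×n} with σσ' ≥ δ·I_m and |σ| ≤ C, let Λ ∈ ℝⁿ, and let Θ ⊆ ℝ^m × [0,∞) be a set containing (0,0). Then there exists a constant K > 0, depending only on (δ₁, δ₂, δ, γ, C, m, n) and not on Λ, such that every pair (π̂, ĉ) ∈ Θ that attains sup_{(π,c) ∈ Θ} [ −((1−γ)/2)·P·π'σσ'π + π'(Pb + σΛ) + c^γ/γ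 − P·c ] satisfies |π̂| ≤ K·(1 + |Λ|) and ĉ ≤ K·(1 + |Λ|²). -/
set_option maxHeartbeats 1000000

open Matrix

/-- Young-type bound: `c ^ γ ≤ ε * c + M` for some constant `M`. -/
lemma young_aux (γ ε : ℝ) (hγ0 : 0 < γ) (hγ1 : γ < 1) (hε : 0 < ε) :
    ∃ M : ℝ, 0 ≤ M ∧ ∀ c : ℝ, 0 ≤ c → c ^ γ ≤ ε * c + M := by
  refine ⟨(ε ^ (1/(γ-1))) ^ γ, Real.rpow_nonneg (Real.rpow_pos_of_pos hε _).le _, fun c hc => ?_⟩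
  set t := ε ^ (1/(γ-1)) with ht
  have ht0 : 0 < t := Real.rpow_pos_of_pos hε _
  rcases le_or_gt c t with h | h
  · have h1 : c ^ γ ≤ t ^ γ := Real.rpow_le_rpow hc h hγ0.le
    nlinarith [mul_nonneg hε.le hc]
  · have hc0 : 0 < c := ht0.trans h
    have h1 : c ^ (γ-1) * c = c ^ γ := by
      rw [← Real.rpow_add_one hc0.ne' (γ-1)]; norm_num
    have h2 : c ^ (γ-1) ≤ t ^ (γ-1) :=
      Real.rpow_le_rpow_of_nonpos ht0 h.le (by linarith)
    have h3 : t ^ (γ-1) = ε := by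
      rw [ht, ← Real.rpow_mul hε.le, one_div,
        inv_mul_cancel₀ (by intro hh; apply absurd hh; intro hh2; linarith : γ - 1 ≠ 0),
        Real.rpow_one]
    have hM : (0:ℝ) ≤ t ^ γ := (Real.rpow_pos_of_pos ht0 γ).le
    nlinarith [mul_le_mul_of_nonneg_right h2 hc]

/-- Cauchy–Schwarz for finite sums. -/
lemma cs_aux {k : ℕ} (f g : Fin k → ℝ) :
    ∑ i, f i * g i ≤ Real.sqrt (∑ i, f i ^ 2) * Real.sqrt (∑ i, g i ^ 2) :=
  Real.sum_mul_le_sqrt_mul_sqrt _ _ _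

/-- Resolving a quadratic inequality. -/
lemma quad_aux (a s D r M : ℝ) (ha : 0 < a) (hr : 0 ≤ r) (hD : 0 ≤ D)
    (hM : a * r ^ 2 = M) (h : a * s ^ 2 ≤ s * D + M) : s ≤ D / a + r := by
  rcases le_or_gt s r with hsr | hsr
  · have : 0 ≤ D / a := div_nonneg hD ha.le
    linarith
  · have hsum : 0 < s + r := by linarith
    have h2' : a * ((s - r) * (s + r)) ≤ D * (s + r) := by nlinarith [mul_nonneg hD hr]
    have h2 : (s - r) * (s + r) ≤ (D / a) * (s + r) := by
      rw [div_mul_eq_mul_div, le_div_iff₀ ha]; nlinarith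
    have := le_of_mul_le_mul_right h2 hsum
    linarith

theorem stmt_19 (γ : ℝ) (hγ : γ ∈ Set.Ioo (0 : ℝ) 1) (m n : ℕ) (hm : 1 ≤ m) (hn : 1 ≤ n)
    (δ₁ δ₂ δ C : ℝ) (hδ₁ : 0 < δ₁) (hδ₁₂ : δ₁ ≤ δ₂) (hδ : 0 < δ) (hC : 0 < C) :
    ∃ K : ℝ, 0 < K ∧
      ∀ P ∈ Set.Icc δ₁ δ₂, ∀ b : Fin m → ℝ, Real.sqrt (∑ i, b i ^ 2) ≤ C →
      ∀ σ : Matrix (Fin m) (Fin n) ℝ,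
        (σ * σᵀ - δ • (1 : Matrix (Fin m) (Fin m) ℝ)).PosSemidef →
        Real.sqrt (∑ i, ∑ j, σ i j ^ 2) ≤ C →
      ∀ Λ : Fin n → ℝ, ∀ Θ : Set ((Fin m → ℝ) × ℝ),
        (∀ p ∈ Θ, 0 ≤ p.2) → ((0 : Fin m → ℝ), (0 : ℝ)) ∈ Θ →
      ∀ πhat : Fin m → ℝ, ∀ chat : ℝ, (πhat, chat) ∈ Θ →
        (∀ p ∈ Θ,
          -((1 - γ) / 2) * P * (p.1 ⬝ᵥ ((σ * σᵀ) *ᵥ p.1)) + p.1 ⬝ᵥ (P • b + σ *ᵥ Λ)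
              + p.2 ^ γ / γ - P * p.2
            ≤ -((1 - γ) / 2) * P * (πhat ⬝ᵥ ((σ * σᵀ) *ᵥ πhat)) + πhat ⬝ᵥ (P • b + σ *ᵥ Λ)
              + chat ^ γ / γ - P * chat) →
        Real.sqrt (∑ i, πhat i ^ 2) ≤ K * (1 + Real.sqrt (∑ j, Λ j ^ 2))
          ∧ chat ≤ K * (1 + ∑ j, Λ j ^ 2) := by
  obtain ⟨hγ0, hγ1⟩ := hγ
  -- constants
  set a : ℝ := (1 - γ) / 2 * δ₁ * δ with ha_def
  have ha : 0 < a := by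
    apply mul_pos (mul_pos (by linarith) hδ₁) hδ
  obtain ⟨M, hM0, hMy⟩ := young_aux γ (γ * δ₁ / 2) hγ0 hγ1 (by positivity)
  set M' : ℝ := M / γ with hM'_def
  have hM'0 : 0 ≤ M' := div_nonneg hM0 hγ0.le
  set r : ℝ := Real.sqrt (M' / a) with hr_def
  have hr0 : 0 ≤ r := Real.sqrt_nonneg _
  have hr2 : a * r ^ 2 = M' := by
    rw [hr_def, Real.sq_sqrt (div_nonneg hM'0 ha.le), mul_div_cancel₀ _ ha.ne']
  set K₁ : ℝ := (δ₂ * C + C) / a + r + 1 with hK₁_def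
  have hK₁0 : 0 < K₁ := by
    have h : 0 ≤ (δ₂ * C + C) / a := div_nonneg (by nlinarith) ha.le
    simp only [hK₁_def]; linarith
  set K₂ : ℝ := 2 / δ₁ * (2 * K₁ * (δ₂ * C + C) + M') with hK₂_def
  have hK₂0 : 0 ≤ K₂ := by
    have h1 : 0 ≤ 2 / δ₁ := by positivity
    have hDC : 0 < δ₂ * C + C := by
      have := mul_pos (lt_of_lt_of_le hδ₁ hδ₁₂) hC; linarith
    have h2 : 0 ≤ 2 * K₁ * (δ₂ * C + C) + M' := by
      have := mul_pos (mul_pos two_pos hK₁0) hDC; linarith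
    exact mul_nonneg h1 h2
  clear_value a M' r K₁ K₂
  refine ⟨K₁ + K₂, by linarith, ?_⟩
  intro P hP b hb σ hpsd hσF Λ Θ hΘc hΘ0 πhat chat hmem hopt
  have hP1 : δ₁ ≤ P := hP.1
  have hP2 : P ≤ δ₂ := hP.2
  have hP0 : 0 < P := lt_of_lt_of_le hδ₁ hP1
  set S : ℝ := ∑ i, πhat i ^ 2 with hS_def
  have hS0 : 0 ≤ S := Finset.sum_nonneg fun i _ => sq_nonneg _
  set s : ℝ := Real.sqrt S with hs_def
  have hs0 : 0 ≤ s := Real.sqrt_nonneg _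
  have hssq : s ^ 2 = S := Real.sq_sqrt hS0
  set Lsq : ℝ := ∑ j, Λ j ^ 2 with hLsq_def
  have hLsq0 : 0 ≤ Lsq := Finset.sum_nonneg fun i _ => sq_nonneg _
  set L : ℝ := Real.sqrt Lsq with hL_def
  have hL0 : 0 ≤ L := Real.sqrt_nonneg _
  have hLL : L ^ 2 = Lsq := Real.sq_sqrt hLsq0
  clear_value S s Lsq L
  have hchat0 : 0 ≤ chat := hΘc _ hmem
  -- the value at (0,0) is 0, so the optimum value is ≥ 0
  have h00 : (0:ℝ) ≤ -((1 - γ) / 2) * P * (πhat ⬝ᵥ ((σ * σᵀ) *ᵥ πhat))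
      + πhat ⬝ᵥ (P • b + σ *ᵥ Λ) + chat ^ γ / γ - P * chat := by
    have := hopt ((0 : Fin m → ℝ), (0 : ℝ)) hΘ0
    simpa [zero_dotProduct, Real.zero_rpow hγ0.ne'] using this
  -- coercivity of the quadratic form
  have hpp : πhat ⬝ᵥ πhat = S := by simp [dotProduct, hS_def, pow_two]
  have hQ : δ * S ≤ πhat ⬝ᵥ ((σ * σᵀ) *ᵥ πhat) := by
    have h0 := hpsd.dotProduct_mulVec_nonneg πhat
    rw [Matrix.sub_mulVec, Matrix.smul_mulVec, Matrix.one_mulVec] at h0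
    rw [dotProduct_sub, dotProduct_smul, smul_eq_mul] at h0
    simp only [star_trivial] at h0
    rw [hpp] at h0
    linarith
  have hQ0 : 0 ≤ πhat ⬝ᵥ ((σ * σᵀ) *ᵥ πhat) :=
    le_trans (mul_nonneg hδ.le hS0) hQ
  -- linear term bound
  have hsS : Real.sqrt (∑ i, πhat i ^ 2) = s := by rw [hs_def, hS_def]
  have hlinb : πhat ⬝ᵥ b ≤ s * C := by
    have h1 := cs_aux πhat b
    rw [hsS] at h1
    have h2 : s * Real.sqrt (∑ i, b i ^ 2) ≤ s * C :=
      mul_le_mul_of_nonneg_left hb hs0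
    calc πhat ⬝ᵥ b = ∑ i, πhat i * b i := rfl
      _ ≤ _ := le_trans h1 h2
  have hσΛ : πhat ⬝ᵥ (σ *ᵥ Λ) ≤ s * (C * L) := by
    have h1 := cs_aux πhat (σ *ᵥ Λ)
    rw [hsS] at h1
    have h2 : ∑ i, (σ *ᵥ Λ) i ^ 2 ≤ (∑ i, ∑ j, σ i j ^ 2) * Lsq := by
      calc ∑ i, (σ *ᵥ Λ) i ^ 2 ≤ ∑ i, ((∑ j, σ i j ^ 2) * Lsq) := by
            refine Finset.sum_le_sum fun i _ => ?_
            have := Finset.sum_mul_sq_le_sq_mul_sq Finset.univ (fun j => σ i j) Λ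
            simpa [Matrix.mulVec, dotProduct, hLsq_def] using this
        _ = (∑ i, ∑ j, σ i j ^ 2) * Lsq := by rw [← Finset.sum_mul]
    have h3 : Real.sqrt (∑ i, (σ *ᵥ Λ) i ^ 2) ≤ C * L := by
      calc Real.sqrt (∑ i, (σ *ᵥ Λ) i ^ 2)
          ≤ Real.sqrt ((∑ i, ∑ j, σ i j ^ 2) * Lsq) := Real.sqrt_le_sqrt h2
        _ = Real.sqrt (∑ i, ∑ j, σ i j ^ 2) * L := by
            rw [Real.sqrt_mul' _ hLsq0, hL_def]
        _ ≤ C * L := mul_le_mul_of_nonneg_right hσF hL0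
    calc πhat ⬝ᵥ (σ *ᵥ Λ) = ∑ i, πhat i * (σ *ᵥ Λ) i := rfl
      _ ≤ s * Real.sqrt (∑ i, (σ *ᵥ Λ) i ^ 2) := h1
      _ ≤ s * (C * L) := mul_le_mul_of_nonneg_left h3 hs0
  have hlin : πhat ⬝ᵥ (P • b + σ *ᵥ Λ) ≤ s * (δ₂ * C + C * L) := by
    rw [dotProduct_add, dotProduct_smul, smul_eq_mul]
    have h1 : P * (πhat ⬝ᵥ b) ≤ P * (s * C) :=
      mul_le_mul_of_nonneg_left hlinb hP0.le
    have h2 : P * (s * C) ≤ δ₂ * (s * C) :=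
      mul_le_mul_of_nonneg_right hP2 (mul_nonneg hs0 hC.le)
    linarith only [h1, h2, hσΛ]
  -- consumption bound
  have hy : chat ^ γ / γ ≤ δ₁ / 2 * chat + M' := by
    rw [div_le_iff₀ hγ0]
    have h1 := hMy chat hchat0
    have h2 : M' * γ = M := by rw [hM'_def]; exact div_mul_cancel₀ _ hγ0.ne'
    linarith only [h1, h2]
  -- the key quadratic inequality
  have hPQ : δ₁ * (δ * S) ≤ P * (πhat ⬝ᵥ ((σ * σᵀ) *ᵥ πhat)) := by
    calc δ₁ * (δ * S) ≤ δ₁ * (πhat ⬝ᵥ ((σ * σᵀ) *ᵥ πhat)) :=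
          mul_le_mul_of_nonneg_left hQ hδ₁.le
      _ ≤ P * (πhat ⬝ᵥ ((σ * σᵀ) *ᵥ πhat)) := mul_le_mul_of_nonneg_right hP1 hQ0
  have h5 : (1 - γ) / 2 * (δ₁ * (δ * S)) ≤ (1 - γ) / 2 * (P * (πhat ⬝ᵥ ((σ * σᵀ) *ᵥ πhat))) :=
    mul_le_mul_of_nonneg_left hPQ (by linarith)
  have hPc : δ₁ * chat ≤ P * chat := mul_le_mul_of_nonneg_right hP1 hchat0
  have key : a * s ^ 2 + δ₁ / 2 * chat ≤ s * (δ₂ * C + C * L) + M' := by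
    rw [hssq, ha_def]
    linarith only [h00, h5, hPc, hlin, hy]
  -- bound on s
  have hD0 : 0 ≤ δ₂ * C + C * L := by
    have h1 := mul_pos (show (0:ℝ) < δ₂ by linarith) hC
    have h2 := mul_nonneg hC.le hL0
    linarith only [h1, h2]
  have hsbound : s ≤ (δ₂ * C + C * L) / a + r := by
    apply quad_aux a s (δ₂ * C + C * L) r M' ha hr0 hD0 hr2
    have hcc : 0 ≤ δ₁ / 2 * chat := by positivity
    linarith only [key, hcc]
  have hsK : s ≤ K₁ * (1 + L) := by
    have haK : a * K₁ = (δ₂ * C + C) + a * r + a := by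
      rw [hK₁_def]; field_simp
    have h6 : a * s ≤ (δ₂ * C + C * L) + a * r := by
      have := mul_le_mul_of_nonneg_left hsbound ha.le
      calc a * s ≤ a * ((δ₂ * C + C * L) / a + r) := this
        _ = (δ₂ * C + C * L) + a * r := by field_simp
    have h7 : a * s ≤ a * (K₁ * (1 + L)) := by
      have hexp : a * (K₁ * (1 + L)) = a * K₁ + a * K₁ * L := by ring
      rw [hexp, haK]
      have nn1 : 0 ≤ δ₂ * C * L := mul_nonneg (mul_nonneg (by linarith) hC.le) hL0
      have nn2 : 0 ≤ a * r * L := mul_nonneg (mul_nonneg ha.le hr0) hL0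
      have nn3 : 0 ≤ a * L := mul_nonneg ha.le hL0
      linarith only [h6, nn1, nn2, nn3, ha.le, hC.le]
    exact le_of_mul_le_mul_left h7 ha
  constructor
  · calc s ≤ K₁ * (1 + L) := hsK
      _ ≤ (K₁ + K₂) * (1 + L) := by
        exact mul_le_mul_of_nonneg_right (by linarith) (by linarith)
  · -- bound on chat
    have h8 : δ₁ / 2 * chat ≤ s * (δ₂ * C + C * L) + M' := by
      linarith only [key, mul_nonneg ha.le (sq_nonneg s)]
    have h9 : s * (δ₂ * C + C * L) ≤ K₁ * (1 + L) * (δ₂ * C + C * L) :=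
      mul_le_mul_of_nonneg_right hsK hD0
    have hδ₂C : 0 < δ₂ * C := mul_pos (lt_of_lt_of_le hδ₁ hδ₁₂) hC
    have h10' : (1 + L) * (δ₂ * C + C * L) ≤ 2 * (δ₂ * C + C) * (1 + L ^ 2) := by
      linarith only [mul_nonneg hδ₂C.le (sq_nonneg (L - 1)), mul_nonneg hC.le (sq_nonneg (L - 1)),
        mul_nonneg hδ₂C.le hL0, mul_nonneg hC.le hL0, mul_nonneg hC.le (sq_nonneg L),
        mul_nonneg hδ₂C.le (sq_nonneg L), hδ₂C.le, hC.le]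
    have h10 : K₁ * (1 + L) * (δ₂ * C + C * L) ≤ 2 * K₁ * (δ₂ * C + C) * (1 + L ^ 2) := by
      have h := mul_le_mul_of_nonneg_left h10' hK₁0.le
      linarith only [h]
    have h11 : δ₁ / 2 * chat ≤ 2 * K₁ * (δ₂ * C + C) * (1 + L ^ 2) + M' := by linarith
    have h12 : chat ≤ K₂ * (1 + L ^ 2) := by
      have hKd : δ₁ / 2 * (K₂ * (1 + L ^ 2)) = (2 * K₁ * (δ₂ * C + C) + M') * (1 + L ^ 2) := by
        rw [hK₂_def]; field_simp
      have h13 : δ₁ / 2 * chat ≤ δ₁ / 2 * (K₂ * (1 + L ^ 2)) := by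
        rw [hKd]
        linarith only [h11, mul_nonneg hM'0 (sq_nonneg L)]
      have := le_of_mul_le_mul_left (by linarith [h13] : δ₁ / 2 * chat ≤ δ₁ / 2 * (K₂ * (1 + L ^ 2))) (by linarith : (0:ℝ) < δ₁ / 2)
      exact this
    calc chat ≤ K₂ * (1 + L ^ 2) := h12
      _ = K₂ * (1 + Lsq) := by rw [hLL]
      _ ≤ (K₁ + K₂) * (1 + Lsq) := by
        exact mul_le_mul_of_nonneg_right (by linarith) (by linarith)
end
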